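/- Consider the DGL-based classification setup with M ≥ 2 hypotheses over a finite alphabet 𝒳, test sequence length n, and training sequence length N = nα for α > 0, where the true source distributions P_1,…,P_M satisfy min_{i ≠ j} V(P_i, P_j) > 0. Then the classification error probability satisfies Pr[e_CL] ≤ 2M · exp(−n( 2α (min_{i ≠ j} V(P_i, P_j))² / (3|𝒳| + 2√α)² − max{ 2·ln(M−1)/n , ln|𝒳| / n } )). -/

import Mathlib

open MeasureTheory ProbabilityTheory

/-- Total variation distance between two probability mass functions on a
finite alphabet: `V(P,Q) = (1/2) * ∑ a, |P a - Q a|`. -/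
noncomputable def tvDist {𝒳 : Type*} [Fintype 𝒳] (P Q : 𝒳 → ℝ) : ℝ :=
  (1 / 2) * ∑ a, |P a - Q a|

/-- Minimum of `tvDist (Q i) (Q j)` over all ordered pairs of distinct indices. -/
noncomputable def minPairTV {𝒳 : Type*} [Fintype 𝒳] {M : ℕ} (Q : Fin M → 𝒳 → ℝ) : ℝ :=
  sInf {x | ∃ i j : Fin M, i ≠ j ∧ x = tvDist (Q i) (Q j)}

/-- Empirical distribution of a sample `x : Fin N → 𝒳`:
`T a = (1/N) * #{k : x k = a}`. -/
noncomputable def empDist {𝒳 : Type*} [Fintype 𝒳] [DecidableEq 𝒳] {N : ℕ}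
    (x : Fin N → 𝒳) : 𝒳 → ℝ :=
  fun a => ((Finset.univ.filter fun k => x k = a).card : ℝ) / N

/-- The DGL statistic of hypothesis `i`: the maximum over the sets
`A_{p,q} = {a : T q a ≤ T p a}` (for `p < q`) of `|T_i(A) - ν(A)|`. -/
noncomputable def dglScore {𝒳 : Type*} [Fintype 𝒳] {M : ℕ}
    (T : Fin M → 𝒳 → ℝ) (ν : 𝒳 → ℝ) (i : Fin M) : ℝ :=
  sSup {x | ∃ p q : Fin M, p < q ∧
    x = |(∑ a ∈ Finset.univ.filter fun a => T q a ≤ T p a, T i a) -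
         (∑ a ∈ Finset.univ.filter fun a => T q a ≤ T p a, ν a)|}

/-- The DGL test: accept the smallest hypothesis index minimizing the DGL statistic. -/
noncomputable def dglClassify {𝒳 : Type*} [Fintype 𝒳] {M : ℕ} (hM : 0 < M)
    (T : Fin M → 𝒳 → ℝ) (ν : 𝒳 → ℝ) : Fin M :=
  (Finset.univ.filter fun i => ∀ j, dglScore T ν i ≤ dglScore T ν j).min' (by
    obtain ⟨i, -, hi⟩ := Finset.exists_min_image Finset.univ (dglScore T ν)
      ⟨⟨0, hM⟩, Finset.mem_univ _⟩
    exact ⟨i, Finset.mem_filter.mpr ⟨Finset.mem_univ _, fun j => hi j (Finset.mem_univ _)⟩⟩)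

/-- The discrete measure on `𝒳` whose mass at `a` is `P a`. -/
noncomputable def measOf {𝒳 : Type*} [Fintype 𝒳] [MeasurableSpace 𝒳] (P : 𝒳 → ℝ) :
    Measure 𝒳 :=
  ∑ a, ENNReal.ofReal (P a) • Measure.dirac a

/-- The joint law of the DGL-based classification experiment on the sample space
`(training sequences) × (true hypothesis index) × (test sequence)`:
the `M` training sequences of length `N` are i.i.d. from `P 1, …, P M` respectively
and mutually independent, the hypothesis index `J` is uniform on `Fin M` and
independent of the training data, and given `J = j` the test sequence of length `n`
is i.i.d. from `P j`. -/
noncomputable def classMeasure {𝒳 : Type*} [Fintype 𝒳] [MeasurableSpace 𝒳]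
    {M N n : ℕ} (P : Fin M → 𝒳 → ℝ) :
    Measure ((Fin M → Fin N → 𝒳) × Fin M × (Fin n → 𝒳)) :=
  (M : ENNReal)⁻¹ • ∑ j : Fin M,
    (Measure.pi fun i => Measure.pi fun _ : Fin N => measOf (P i)).prod
      ((Measure.dirac j).prod (Measure.pi fun _ : Fin n => measOf (P j)))

/-- The classification-error event: the DGL test applied with the empirical training
distributions as nominal distributions outputs an index different from the true one. -/
def errEvent {𝒳 : Type*} [Fintype 𝒳] [DecidableEq 𝒳] {M N n : ℕ} (hM : 0 < M) :
    Set ((Fin M → Fin N → 𝒳) × Fin M × (Fin n → 𝒳)) :=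
  {ω | dglClassify hM (fun i => empDist (ω.1 i)) (empDist ω.2.2) ≠ ω.2.1}


set_option linter.unusedSectionVars false
open Real Finset
set_option linter.unusedSectionVars false

def cntIn {𝒳 : Type*} [Fintype 𝒳] [DecidableEq 𝒳] {m : ℕ} (A : Finset 𝒳) (y : Fin m → 𝒳) : ℕ :=
  (Finset.univ.filter fun k => y k ∈ A).card

lemma mgf_aux {p l : ℝ} (hp0 : 0 ≤ p) (hp1 : p ≤ 1) (hl : 0 ≤ l) :
    (1 - p) + p * exp l ≤ exp (l * p + l ^ 2 / 8) := by
  set c := 1 - p with hc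
  have hc0 : 0 ≤ c := by linarith
  have pos : ∀ x : ℝ, 0 < c + p * exp x := by
    intro x
    rcases eq_or_lt_of_le hp0 with h | h
    · simp [← h, hc]
    · have := exp_pos x
      nlinarith
  set φ' : ℝ → ℝ := fun x => p * exp x / (c + p * exp x) with hφ'
  have hφd : ∀ x : ℝ, HasDerivAt (fun y => Real.log (c + p * exp y)) (φ' x) x := by
    intro x
    have h1 : HasDerivAt (fun y => c + p * exp y) (p * exp x) x := by
      simpa using ((Real.hasDerivAt_exp x).const_mul p).const_add c
    simpa [hφ'] using h1.log (pos x).ne'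
  set ψ : ℝ → ℝ := fun x => x * p + x ^ 2 / 8 - Real.log (c + p * exp x) with hψ
  set ψ' : ℝ → ℝ := fun x => p + x / 4 - φ' x with hψ'd
  have hψd : ∀ x : ℝ, HasDerivAt ψ (ψ' x) x := by
    intro x
    have h1 : HasDerivAt (fun y : ℝ => y * p + y ^ 2 / 8) (p + x / 4) x := by
      have := ((hasDerivAt_id x).mul_const p).add
        (((hasDerivAt_pow 2 x)).div_const 8)
      exact this.congr_deriv (by norm_num; ring)
    exact h1.sub (hφd x)
  have hψ'd2 : ∀ x : ℝ, HasDerivAt ψ' (1 / 4 - c * (p * exp x) / (c + p * exp x) ^ 2) x := by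
    intro x
    have h1 : HasDerivAt (fun y => c + p * exp y) (p * exp x) x := by
      simpa using ((Real.hasDerivAt_exp x).const_mul p).const_add c
    have h2 : HasDerivAt (fun y => p * exp y) (p * exp x) x :=
      (Real.hasDerivAt_exp x).const_mul p
    have h3 : HasDerivAt φ' ((p * exp x * (c + p * exp x) - p * exp x * (p * exp x)) / (c + p * exp x) ^ 2) x :=
      h2.div h1 (pos x).ne'
    have h4 : HasDerivAt (fun y : ℝ => p + y / 4) (1 / 4) x := by
      simpa using (hasDerivAt_id x).div_const 4 |>.const_add p
    have h5 := h4.sub h3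
    exact h5.congr_deriv (by rw [show p * exp x * (c + p * exp x) - p * exp x * (p * exp x) = c * (p * exp x) by ring])
  have hψ'nonneg : ∀ x ∈ Set.Ici (0 : ℝ), 0 ≤ ψ' x := by
    have hmono : Monotone ψ' := by
      have hdiff : Differentiable ℝ ψ' := fun x => (hψ'd2 x).differentiableAt
      apply monotone_of_deriv_nonneg hdiff
      intro x
      rw [(hψ'd2 x).deriv]
      have h := pos x
      have he := exp_pos x
      have key : 4 * (c * (p * exp x)) ≤ (c + p * exp x) ^ 2 := by nlinarith [sq_nonneg (c - p * exp x)]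
      have : c * (p * exp x) / (c + p * exp x) ^ 2 ≤ 1 / 4 := by
        rw [div_le_div_iff₀ (by positivity) (by norm_num)]
        nlinarith
      linarith
    intro x hx
    have h0 : ψ' 0 = 0 := by
      simp only [hψ'd, hφ']
      have : c + p * exp 0 = 1 := by simp [hc]
      rw [this]
      simp
    calc (0:ℝ) = ψ' 0 := h0.symm
    _ ≤ ψ' x := hmono hx
  have hψmono : MonotoneOn ψ (Set.Ici (0:ℝ)) := by
    apply monotoneOn_of_deriv_nonneg (convex_Ici 0)
    · exact Continuous.continuousOn (by
        have : Differentiable ℝ ψ := fun x => (hψd x).differentiableAt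
        exact this.continuous)
    · intro x hx
      exact ((hψd x).differentiableAt).differentiableWithinAt
    · intro x hx
      rw [(hψd x).deriv]
      exact hψ'nonneg x (le_of_lt (by simpa using hx))
  have hψ0 : ψ 0 = 0 := by simp [hψ, hc]
  have hle : 0 ≤ ψ l := by
    calc (0:ℝ) = ψ 0 := hψ0.symm
    _ ≤ ψ l := hψmono (by simp) (by simpa using hl) hl
  have hlog : Real.log (c + p * exp l) ≤ l * p + l ^ 2 / 8 := by
    simp only [hψ] at hle; linarith
  calc c + p * exp l = exp (Real.log (c + p * exp l)) := (exp_log (pos l)).symm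
  _ ≤ exp (l * p + l ^ 2 / 8) := exp_le_exp.mpr hlog


section
variable {𝒳 : Type*} [Fintype 𝒳] [DecidableEq 𝒳]

lemma cntIn_cast {m : ℕ} (A : Finset 𝒳) (y : Fin m → 𝒳) :
    (cntIn A y : ℝ) = ∑ k, (if y k ∈ A then (1:ℝ) else 0) := by
  rw [cntIn, Finset.card_filter]
  push_cast
  apply Finset.sum_congr rfl
  intro k _
  split_ifs <;> norm_num

lemma chernoff_core (Q : 𝒳 → ℝ) (hQ0 : ∀ a, 0 ≤ Q a) (hQ1 : ∑ a, Q a = 1)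
    (A : Finset 𝒳) (m : ℕ) {t : ℝ} (ht : 0 ≤ t) :
    ∑ y : Fin m → 𝒳, (if (m:ℝ) * ((∑ a ∈ A, Q a) + t) ≤ (cntIn A y : ℝ) then ∏ k, Q (y k) else 0)
      ≤ Real.exp (-2 * m * t ^ 2) := by
  set p := ∑ a ∈ A, Q a with hp
  have hp0 : 0 ≤ p := Finset.sum_nonneg fun a _ => hQ0 a
  have hp1 : p ≤ 1 := by
    rw [hp, ← hQ1]
    exact Finset.sum_le_sum_of_subset_of_nonneg (Finset.subset_univ A) fun a _ _ => hQ0 a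
  set l := 4 * t with hldef
  have hl : 0 ≤ l := by positivity
  have step1 : ∀ y : Fin m → 𝒳,
      (if (m:ℝ) * (p + t) ≤ (cntIn A y : ℝ) then ∏ k, Q (y k) else 0)
        ≤ Real.exp (l * ((cntIn A y : ℝ) - m * (p + t))) * ∏ k, Q (y k) := by
    intro y
    have hprod : 0 ≤ ∏ k, Q (y k) := Finset.prod_nonneg fun k _ => hQ0 _
    split_ifs with h
    · nlinarith [Real.one_le_exp (by nlinarith : 0 ≤ l * ((cntIn A y : ℝ) - m * (p + t)))]
    · positivity
  calc ∑ y : Fin m → 𝒳, (if (m:ℝ) * (p + t) ≤ (cntIn A y : ℝ) then ∏ k, Q (y k) else 0)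
      ≤ ∑ y : Fin m → 𝒳, Real.exp (l * ((cntIn A y : ℝ) - m * (p + t))) * ∏ k, Q (y k) :=
        Finset.sum_le_sum fun y _ => step1 y
    _ = Real.exp (-(l * (m * (p + t)))) * ∑ y : Fin m → 𝒳, ∏ k, (Q (y k) * Real.exp (l * (if y k ∈ A then (1:ℝ) else 0))) := by
        rw [Finset.mul_sum]
        apply Finset.sum_congr rfl
        intro y _
        rw [mul_sub, Real.exp_sub, div_eq_mul_inv, ← Real.exp_neg]
        rw [cntIn_cast, Finset.mul_sum, Real.exp_sum]
        rw [Finset.prod_mul_distrib]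
        ring
    _ = Real.exp (-(l * (m * (p + t)))) * (∑ a, Q a * Real.exp (l * (if a ∈ A then (1:ℝ) else 0))) ^ m := by
        rw [Fintype.sum_pow]
    _ = Real.exp (-(l * (m * (p + t)))) * ((1 - p) + p * Real.exp l) ^ m := by
        congr 2
        rw [← Finset.sum_add_sum_compl A fun a => Q a * Real.exp (l * (if a ∈ A then (1:ℝ) else 0))]
        have h1 : ∑ a ∈ A, Q a * Real.exp (l * (if a ∈ A then (1:ℝ) else 0)) = p * Real.exp l := by
          rw [hp, Finset.sum_mul]
          apply Finset.sum_congr rfl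
          intro a ha
          rw [if_pos ha, mul_one]
        have h2 : ∑ a ∈ Aᶜ, Q a * Real.exp (l * (if a ∈ A then (1:ℝ) else 0)) = 1 - p := by
          have : ∑ a ∈ Aᶜ, Q a * Real.exp (l * (if a ∈ A then (1:ℝ) else 0)) = ∑ a ∈ Aᶜ, Q a := by
            apply Finset.sum_congr rfl
            intro a ha
            rw [if_neg (Finset.mem_compl.mp ha), mul_zero, Real.exp_zero, mul_one]
          rw [this]
          have := Finset.sum_add_sum_compl A Q
          rw [hQ1] at this
          linarith [this]
        rw [h1, h2]; ring
    _ ≤ Real.exp (-(l * (m * (p + t)))) * (Real.exp (l * p + l ^ 2 / 8)) ^ m := by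
        apply mul_le_mul_of_nonneg_left _ (Real.exp_nonneg _)
        apply pow_le_pow_left₀ (by nlinarith [Real.exp_nonneg l]) (mgf_aux hp0 hp1 hl)
    _ = Real.exp (-2 * m * t ^ 2) := by
        rw [← Real.exp_nat_mul, ← Real.exp_add]
        congr 1
        rw [hldef]
        ring


lemma tvDist_nonneg (Q R : 𝒳 → ℝ) : 0 ≤ tvDist Q R := by
  have : 0 ≤ ∑ a, |Q a - R a| := Finset.sum_nonneg fun a _ => abs_nonneg _
  rw [tvDist]; linarith

lemma tvDist_symm (Q R : 𝒳 → ℝ) : tvDist Q R = tvDist R Q := by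
  rw [tvDist, tvDist]
  congr 1
  exact Finset.sum_congr rfl fun a _ => abs_sub_comm _ _

lemma tvDist_triangle (Q R S : 𝒳 → ℝ) : tvDist Q S ≤ tvDist Q R + tvDist R S := by
  rw [tvDist, tvDist, tvDist, ← mul_add, ← Finset.sum_add_distrib]
  have : ∑ a, |Q a - S a| ≤ ∑ a, (|Q a - R a| + |R a - S a|) :=
    Finset.sum_le_sum fun a _ => abs_sub_le _ _ _
  linarith

/-- Lemma B: set-probability differences are bounded by TV distance. -/
lemma abs_setsum_le (Q R : 𝒳 → ℝ) (hQR : ∑ a, Q a = ∑ a, R a) (A : Finset 𝒳) :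
    |∑ a ∈ A, Q a - ∑ a ∈ A, R a| ≤ tvDist Q R := by
  have hd : ∑ a, (Q a - R a) = 0 := by rw [Finset.sum_sub_distrib, hQR, sub_self]
  have hmax : ∑ a, max (Q a - R a) 0 = tvDist Q R := by
    have h1 : ∀ a : 𝒳, max (Q a - R a) 0 = ((Q a - R a) + |Q a - R a|) / 2 := by
      intro a
      rcases le_or_gt 0 (Q a - R a) with h | h
      · rw [max_eq_left h, abs_of_nonneg h]; ring
      · rw [max_eq_right h.le, abs_of_neg h]; ring
    rw [Finset.sum_congr rfl fun a _ => h1 a, tvDist]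
    rw [← Finset.sum_div, Finset.sum_add_distrib, hd]
    ring
  have hmin : ∑ a, max (R a - Q a) 0 = tvDist Q R := by
    have h1 : ∀ a : 𝒳, max (R a - Q a) 0 = (-(Q a - R a) + |Q a - R a|) / 2 := by
      intro a
      rcases le_or_gt 0 (Q a - R a) with h | h
      · rw [max_eq_right (by linarith), abs_of_nonneg h]; ring
      · rw [max_eq_left (by linarith), abs_of_neg h]; ring
    rw [Finset.sum_congr rfl fun a _ => h1 a, tvDist]
    rw [← Finset.sum_div, Finset.sum_add_distrib, Finset.sum_neg_distrib, hd]
    ring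
  rw [← Finset.sum_sub_distrib, abs_le]
  constructor
  · have h1 : ∑ a ∈ A, (R a - Q a) ≤ ∑ a ∈ A, max (R a - Q a) 0 :=
      Finset.sum_le_sum fun a _ => le_max_left _ _
    have h2 : ∑ a ∈ A, max (R a - Q a) 0 ≤ ∑ a, max (R a - Q a) 0 :=
      Finset.sum_le_sum_of_subset_of_nonneg (Finset.subset_univ A) fun a _ _ => le_max_right _ _
    have h3 : ∑ a ∈ A, (R a - Q a) = -∑ a ∈ A, (Q a - R a) := by
      rw [← Finset.sum_neg_distrib]; apply Finset.sum_congr rfl; intros; ring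
    rw [h3] at h1; linarith [hmin]
  · have h1 : ∑ a ∈ A, (Q a - R a) ≤ ∑ a ∈ A, max (Q a - R a) 0 :=
      Finset.sum_le_sum fun a _ => le_max_left _ _
    have h2 : ∑ a ∈ A, max (Q a - R a) 0 ≤ ∑ a, max (Q a - R a) 0 :=
      Finset.sum_le_sum_of_subset_of_nonneg (Finset.subset_univ A) fun a _ _ => le_max_right _ _
    linarith [hmax]

/-- Lemma A: on the set where `Q ≥ R`, the excess mass is exactly the TV distance. -/
lemma setsum_filter_eq_tv (Q R : 𝒳 → ℝ) (hQR : ∑ a, Q a = ∑ a, R a) :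
    ∑ a ∈ Finset.univ.filter (fun a => R a ≤ Q a), (Q a - R a) = tvDist Q R := by
  have hd : ∑ a, (Q a - R a) = 0 := by rw [Finset.sum_sub_distrib, hQR, sub_self]
  have hsplit := Finset.sum_filter_add_sum_filter_not Finset.univ (fun a => R a ≤ Q a)
    (fun a => Q a - R a)
  have habs : ∑ a, |Q a - R a| =
      ∑ a ∈ Finset.univ.filter (fun a => R a ≤ Q a), (Q a - R a) +
      ∑ a ∈ Finset.univ.filter (fun a => ¬ R a ≤ Q a), -(Q a - R a) := by
    rw [← Finset.sum_filter_add_sum_filter_not Finset.univ (fun a => R a ≤ Q a)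
      (fun a => |Q a - R a|)]
    congr 1
    · apply Finset.sum_congr rfl
      intro a ha
      exact abs_of_nonneg (by linarith [(Finset.mem_filter.mp ha).2])
    · apply Finset.sum_congr rfl
      intro a ha
      have := (Finset.mem_filter.mp ha).2
      rw [abs_of_neg (by linarith [lt_of_not_ge this])]
  rw [Finset.sum_neg_distrib] at habs
  rw [tvDist]
  linarith

lemma sum_filter_card {m : ℕ} (y : Fin m → 𝒳) (A : Finset 𝒳) :
    ∑ a ∈ A, ((Finset.univ.filter fun k => y k = a).card : ℝ) = (cntIn A y : ℝ) := by
  rw [cntIn, Finset.card_filter]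
  push_cast
  have h1 : ∀ a ∈ A, ((Finset.univ.filter fun k => y k = a).card : ℝ)
      = ∑ k, (if y k = a then (1:ℝ) else 0) := by
    intro a _
    rw [Finset.card_filter]
    push_cast
    apply Finset.sum_congr rfl
    intro k _
    split_ifs <;> norm_num
  rw [Finset.sum_congr rfl h1, Finset.sum_comm]
  apply Finset.sum_congr rfl
  intro k _
  rw [Finset.sum_ite_eq A (y k) (fun _ => (1:ℝ))]

lemma empDist_setsum {m : ℕ} (y : Fin m → 𝒳) (A : Finset 𝒳) :
    ∑ a ∈ A, empDist y a = (cntIn A y : ℝ) / m := by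
  simp only [empDist]
  rw [← Finset.sum_div, sum_filter_card]

lemma empDist_sum {m : ℕ} (hm : 0 < m) (y : Fin m → 𝒳) : ∑ a, empDist y a = 1 := by
  have := empDist_setsum y (Finset.univ : Finset 𝒳)
  rw [this]
  have hcnt : cntIn (Finset.univ : Finset 𝒳) y = m := by
    rw [cntIn]
    simp
  rw [hcnt]
  field_simp

lemma freq_dev (Q : 𝒳 → ℝ) (hQ0 : ∀ a, 0 ≤ Q a) (hQ1 : ∑ a, Q a = 1)
    (A : Finset 𝒳) {m : ℕ} (hm : 0 < m) {t : ℝ} (ht : 0 ≤ t) :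
    ∑ y : Fin m → 𝒳, (if t ≤ |(cntIn A y : ℝ) / m - ∑ a ∈ A, Q a| then ∏ k, Q (y k) else 0)
      ≤ 2 * Real.exp (-2 * m * t ^ 2) := by
  have hm' : (0:ℝ) < m := by exact_mod_cast hm
  have hcompl : ∀ y : Fin m → 𝒳, (cntIn Aᶜ y : ℝ) = m - cntIn A y := by
    intro y
    have := Finset.card_filter_add_card_filter_not (s := (Finset.univ : Finset (Fin m)))
      (p := fun k => y k ∈ A)
    have h2 : (Finset.univ.filter fun k => y k ∈ Aᶜ).card
        = (Finset.univ.filter fun k => ¬ (y k ∈ A)).card := by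
      congr 1
      apply Finset.filter_congr
      intro k _
      simp
    rw [cntIn, cntIn, h2]
    simp only [Finset.card_univ, Fintype.card_fin] at this
    have : ((Finset.univ.filter fun k => y k ∈ A).card : ℝ)
        + ((Finset.univ.filter fun k => ¬ y k ∈ A).card : ℝ) = m := by exact_mod_cast this
    linarith
  have hcomplsum : ∑ a ∈ Aᶜ, Q a = 1 - ∑ a ∈ A, Q a := by
    have := Finset.sum_add_sum_compl A Q
    rw [hQ1] at this
    linarith
  have key : ∀ y : Fin m → 𝒳,
      (if t ≤ |(cntIn A y : ℝ) / m - ∑ a ∈ A, Q a| then ∏ k, Q (y k) else 0)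
      ≤ (if (m:ℝ) * ((∑ a ∈ A, Q a) + t) ≤ (cntIn A y : ℝ) then ∏ k, Q (y k) else 0)
        + (if (m:ℝ) * ((∑ a ∈ Aᶜ, Q a) + t) ≤ (cntIn Aᶜ y : ℝ) then ∏ k, Q (y k) else 0) := by
    intro y
    have hw : 0 ≤ ∏ k, Q (y k) := Finset.prod_nonneg fun k _ => hQ0 _
    by_cases h : t ≤ |(cntIn A y : ℝ) / m - ∑ a ∈ A, Q a|
    · rw [if_pos h]
      rcases le_abs.mp h with h1 | h1
      · have hc : (m:ℝ) * ((∑ a ∈ A, Q a) + t) ≤ (cntIn A y : ℝ) := by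
          have := (le_div_iff₀ hm').mp (by linarith : (∑ a ∈ A, Q a) + t ≤ (cntIn A y : ℝ) / m)
          nlinarith
        rw [if_pos hc]
        have : (0:ℝ) ≤ (if (m:ℝ) * ((∑ a ∈ Aᶜ, Q a) + t) ≤ (cntIn Aᶜ y : ℝ) then ∏ k, Q (y k) else 0) := by positivity
        linarith
      · have hc : (m:ℝ) * ((∑ a ∈ Aᶜ, Q a) + t) ≤ (cntIn Aᶜ y : ℝ) := by
          rw [hcompl y, hcomplsum]
          have h2 : (cntIn A y : ℝ) / m ≤ (∑ a ∈ A, Q a) - t := by linarith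
          have := (div_le_iff₀ hm').mp h2
          nlinarith
        rw [if_pos hc]
        have : (0:ℝ) ≤ (if (m:ℝ) * ((∑ a ∈ A, Q a) + t) ≤ (cntIn A y : ℝ) then ∏ k, Q (y k) else 0) := by positivity
        linarith
    · rw [if_neg h]
      positivity
  calc ∑ y : Fin m → 𝒳, (if t ≤ |(cntIn A y : ℝ) / m - ∑ a ∈ A, Q a| then ∏ k, Q (y k) else 0)
      ≤ ∑ y : Fin m → 𝒳,
        ((if (m:ℝ) * ((∑ a ∈ A, Q a) + t) ≤ (cntIn A y : ℝ) then ∏ k, Q (y k) else 0)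
        + (if (m:ℝ) * ((∑ a ∈ Aᶜ, Q a) + t) ≤ (cntIn Aᶜ y : ℝ) then ∏ k, Q (y k) else 0)) :=
      Finset.sum_le_sum fun y _ => key y
    _ = (∑ y : Fin m → 𝒳, if (m:ℝ) * ((∑ a ∈ A, Q a) + t) ≤ (cntIn A y : ℝ) then ∏ k, Q (y k) else 0)
        + ∑ y : Fin m → 𝒳, (if (m:ℝ) * ((∑ a ∈ Aᶜ, Q a) + t) ≤ (cntIn Aᶜ y : ℝ) then ∏ k, Q (y k) else 0) :=
      Finset.sum_add_distrib
    _ ≤ Real.exp (-2 * m * t ^ 2) + Real.exp (-2 * m * t ^ 2) := by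
      gcongr
      · exact chernoff_core Q hQ0 hQ1 A m ht
      · exact chernoff_core Q hQ0 hQ1 Aᶜ m ht
    _ = 2 * Real.exp (-2 * m * t ^ 2) := by ring

lemma tv_dev (Q : 𝒳 → ℝ) (hQ0 : ∀ a, 0 ≤ Q a) (hQ1 : ∑ a, Q a = 1)
    {m : ℕ} (hm : 0 < m) {u : ℝ} (hu : 0 < u) (h𝒳 : Nonempty 𝒳) :
    ∑ y : Fin m → 𝒳, (if u ≤ tvDist (empDist y) Q then ∏ k, Q (y k) else 0)
      ≤ 2 * (Fintype.card 𝒳 : ℝ) *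
        Real.exp (-2 * m * (2 * u / (Fintype.card 𝒳 : ℝ)) ^ 2) := by
  have hc : (0:ℝ) < (Fintype.card 𝒳 : ℝ) := by
    exact_mod_cast Fintype.card_pos_iff.mpr h𝒳
  set s := 2 * u / (Fintype.card 𝒳 : ℝ) with hs_def
  have hs : 0 ≤ s := by positivity
  have key : ∀ y : Fin m → 𝒳,
      (if u ≤ tvDist (empDist y) Q then ∏ k, Q (y k) else 0)
      ≤ ∑ a, (if s ≤ |empDist y a - Q a| then ∏ k, Q (y k) else 0) := by
    intro y
    have hw : 0 ≤ ∏ k, Q (y k) := Finset.prod_nonneg fun k _ => hQ0 _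
    by_cases h : u ≤ tvDist (empDist y) Q
    · rw [if_pos h]
      have hex : ∃ a : 𝒳, s ≤ |empDist y a - Q a| := by
        by_contra hno
        push_neg at hno
        have hlt : ∑ a, |empDist y a - Q a| < ∑ _a : 𝒳, s :=
          Finset.sum_lt_sum_of_nonempty Finset.univ_nonempty fun a _ => hno a
        rw [Finset.sum_const, Finset.card_univ, nsmul_eq_mul] at hlt
        have : (Fintype.card 𝒳 : ℝ) * s = 2 * u := by
          rw [hs_def]; field_simp
        rw [this] at hlt
        rw [tvDist] at h
        linarith
      obtain ⟨a, ha⟩ := hex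
      have := Finset.single_le_sum
        (f := fun a => (if s ≤ |empDist y a - Q a| then ∏ k, Q (y k) else 0))
        (fun a _ => by positivity) (Finset.mem_univ a)
      simpa [ha] using this
    · rw [if_neg h]
      positivity
  calc ∑ y : Fin m → 𝒳, (if u ≤ tvDist (empDist y) Q then ∏ k, Q (y k) else 0)
      ≤ ∑ y : Fin m → 𝒳, ∑ a, (if s ≤ |empDist y a - Q a| then ∏ k, Q (y k) else 0) :=
        Finset.sum_le_sum fun y _ => key y
    _ = ∑ a, ∑ y : Fin m → 𝒳, (if s ≤ |empDist y a - Q a| then ∏ k, Q (y k) else 0) :=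
        Finset.sum_comm
    _ ≤ ∑ _a : 𝒳, 2 * Real.exp (-2 * m * s ^ 2) := by
        apply Finset.sum_le_sum
        intro a _
        have hconv : ∀ y : Fin m → 𝒳, (empDist y a : ℝ) = (cntIn {a} y : ℝ) / m := by
          intro y
          have := empDist_setsum y ({a} : Finset 𝒳)
          rwa [Finset.sum_singleton] at this
        have := freq_dev Q hQ0 hQ1 ({a} : Finset 𝒳) hm hs
        rw [Finset.sum_singleton] at this
        calc ∑ y : Fin m → 𝒳, (if s ≤ |empDist y a - Q a| then ∏ k, Q (y k) else 0)
            = ∑ y : Fin m → 𝒳, (if s ≤ |(cntIn {a} y : ℝ) / m - Q a| then ∏ k, Q (y k) else 0) := by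
              apply Finset.sum_congr rfl
              intro y _
              rw [hconv y]
          _ ≤ 2 * Real.exp (-2 * m * s ^ 2) := this
    _ = 2 * (Fintype.card 𝒳 : ℝ) * Real.exp (-2 * m * s ^ 2) := by
        rw [Finset.sum_const, Finset.card_univ, nsmul_eq_mul]; ring
lemma scoreSet_finite {M : ℕ} (T : Fin M → 𝒳 → ℝ) (ν : 𝒳 → ℝ) (i : Fin M) :
    Set.Finite {x | ∃ p q : Fin M, p < q ∧
      x = |(∑ a ∈ Finset.univ.filter fun a => T q a ≤ T p a, T i a) -
           (∑ a ∈ Finset.univ.filter fun a => T q a ≤ T p a, ν a)|} := by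
  have : {x | ∃ p q : Fin M, p < q ∧
      x = |(∑ a ∈ Finset.univ.filter fun a => T q a ≤ T p a, T i a) -
           (∑ a ∈ Finset.univ.filter fun a => T q a ≤ T p a, ν a)|}
      ⊆ (fun pq : Fin M × Fin M =>
          |(∑ a ∈ Finset.univ.filter fun a => T pq.2 a ≤ T pq.1 a, T i a) -
           (∑ a ∈ Finset.univ.filter fun a => T pq.2 a ≤ T pq.1 a, ν a)|) '' Set.univ := by
    rintro x ⟨p, q, hpq, rfl⟩
    exact ⟨(p, q), Set.mem_univ _, rfl⟩
  exact Set.Finite.subset (Set.Finite.image _ (Set.finite_univ)) this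

lemma det_lemma {M : ℕ} (T : Fin M → 𝒳 → ℝ) (hTsum : ∀ i, ∑ a, T i a = 1)
    (P : Fin M → 𝒳 → ℝ) (hPsum : ∀ i, ∑ a, P i a = 1) (μ : 𝒳 → ℝ)
    {t1 t3 V : ℝ}
    (hV : ∀ p q : Fin M, p ≠ q → V ≤ tvDist (P p) (P q))
    (hgood : ∀ i, tvDist (T i) (P i) < t1)
    (hbudget : V = 4 * t1 + 2 * t3)
    {i j : Fin M} (hij : i ≠ j) (hscore : dglScore T μ i ≤ dglScore T μ j) :
    ∃ p q : Fin M, p ≠ q ∧ t3 ≤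
      |(∑ a ∈ Finset.univ.filter fun a => T q a ≤ T p a, P j a) -
       (∑ a ∈ Finset.univ.filter fun a => T q a ≤ T p a, μ a)| := by
  by_contra hno
  push_neg at hno
  -- notation
  have hsumTP : ∀ p q : Fin M, ∑ a, T p a = ∑ a, P q a := fun p q => by
    rw [hTsum p, hPsum q]
  have hsumTT : ∀ p q : Fin M, ∑ a, T p a = ∑ a, T q a := fun p q => by
    rw [hTsum p, hTsum q]
  -- the score of j is at most t1 + t3
  have hscorej : dglScore T μ j ≤ t1 + t3 := by
    apply csSup_le
    · obtain ⟨p, q, hpq⟩ : ∃ p q : Fin M, p < q := by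
        rcases lt_or_gt_of_ne hij with h | h
        · exact ⟨i, j, h⟩
        · exact ⟨j, i, h⟩
      exact ⟨_, p, q, hpq, rfl⟩
    rintro x ⟨p, q, hpq, rfl⟩
    have h1 : |(∑ a ∈ Finset.univ.filter fun a => T q a ≤ T p a, T j a) -
        (∑ a ∈ Finset.univ.filter fun a => T q a ≤ T p a, P j a)| ≤ tvDist (T j) (P j) :=
      abs_setsum_le _ _ (hsumTP j j) _
    have h2 := hno p q (ne_of_lt hpq)
    calc |(∑ a ∈ Finset.univ.filter fun a => T q a ≤ T p a, T j a) -
        (∑ a ∈ Finset.univ.filter fun a => T q a ≤ T p a, μ a)|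
        ≤ |(∑ a ∈ Finset.univ.filter fun a => T q a ≤ T p a, T j a) -
            (∑ a ∈ Finset.univ.filter fun a => T q a ≤ T p a, P j a)| +
          |(∑ a ∈ Finset.univ.filter fun a => T q a ≤ T p a, P j a) -
            (∑ a ∈ Finset.univ.filter fun a => T q a ≤ T p a, μ a)| := abs_sub_le _ _ _
      _ ≤ t1 + t3 := by
          have := hgood j
          linarith
  -- choose ordered pair
  obtain ⟨p, q, hpq, hpqij⟩ : ∃ p q : Fin M, p < q ∧ ((p = i ∧ q = j) ∨ (p = j ∧ q = i)) := by
    rcases lt_or_gt_of_ne hij with h | h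
    · exact ⟨i, j, h, Or.inl ⟨rfl, rfl⟩⟩
    · exact ⟨j, i, h, Or.inr ⟨rfl, rfl⟩⟩
  set A : Finset 𝒳 := Finset.univ.filter fun a => T q a ≤ T p a with hA
  have he_mem : ∀ r : Fin M,
      |(∑ a ∈ A, T r a) - (∑ a ∈ A, μ a)| ≤ dglScore T μ r := by
    intro r
    apply le_csSup (Set.Finite.bddAbove (scoreSet_finite T μ r))
    exact ⟨p, q, hpq, rfl⟩
  have hei := le_trans (he_mem i) hscore
  have hej := he_mem j
  -- |∑_A T i - ∑_A T j| = tvDist (T i) (T j)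
  have htv : |(∑ a ∈ A, T i a) - (∑ a ∈ A, T j a)| = tvDist (T i) (T j) := by
    have hkey : ∑ a ∈ A, (T p a - T q a) = tvDist (T p) (T q) := by
      rw [hA]
      exact setsum_filter_eq_tv (T p) (T q) (hsumTT p q)
    have hsub : (∑ a ∈ A, T p a) - (∑ a ∈ A, T q a) = tvDist (T p) (T q) := by
      rw [← Finset.sum_sub_distrib]; exact hkey
    rcases hpqij with ⟨hp, hq⟩ | ⟨hp, hq⟩
    · subst hp; subst hq
      rw [hsub, abs_of_nonneg (tvDist_nonneg _ _)]
    · subst hp; subst hq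
      rw [abs_sub_comm, hsub, abs_of_nonneg (tvDist_nonneg _ _), tvDist_symm]
  -- lower bound on tvDist (T i) (T j)
  have hlow : tvDist (P i) (P j) ≤ tvDist (T i) (T j) + tvDist (T i) (P i) + tvDist (T j) (P j) := by
    have h1 := tvDist_triangle (P i) (T i) (P j)
    have h2 := tvDist_triangle (T i) (T j) (P j)
    have h3 := tvDist_symm (P i) (T i)
    have h4 := tvDist_symm (T j) (P j)
    linarith
  have htri : |(∑ a ∈ A, T i a) - (∑ a ∈ A, T j a)| ≤
      |(∑ a ∈ A, T i a) - (∑ a ∈ A, μ a)| + |(∑ a ∈ A, T j a) - (∑ a ∈ A, μ a)| := by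
    have := abs_sub_le ((∑ a ∈ A, T i a)) ((∑ a ∈ A, μ a)) ((∑ a ∈ A, T j a))
    rw [abs_sub_comm ((∑ a ∈ A, μ a)) ((∑ a ∈ A, T j a))] at this
    exact this
  have hVij := hV i j hij
  have hgi := hgood i
  have hgj := hgood j
  rw [htv] at htri
  linarith
end

open MeasureTheory

section Meas
variable {Ω : Type*} [Fintype Ω] [MeasurableSpace Ω] [MeasurableSingletonClass Ω]

lemma measOf_apply (w : Ω → ℝ) (s : Set Ω) :
    measOf w s = ∑ b, ENNReal.ofReal (Set.indicator s w b) := by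
  have hs : MeasurableSet s := s.toFinite.measurableSet
  rw [measOf, Measure.finset_sum_apply]
  apply Finset.sum_congr rfl
  intro b _
  rw [Measure.smul_apply, smul_eq_mul, Measure.dirac_apply' _ hs]
  by_cases hb : b ∈ s
  · rw [Set.indicator_of_mem hb, Set.indicator_of_mem hb, Pi.one_apply, mul_one]
  · rw [Set.indicator_of_notMem hb, Set.indicator_of_notMem hb, mul_zero, ENNReal.ofReal_zero]

lemma measOf_singleton (w : Ω → ℝ) (b : Ω) :
    measOf w {b} = ENNReal.ofReal (w b) := by
  classical
  rw [measOf_apply]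
  rw [Finset.sum_eq_single b]
  · simp
  · intro c _ hc
    rw [Set.indicator_of_notMem (by simpa using hc), ENNReal.ofReal_zero]
  · intro h; exact absurd (Finset.mem_univ b) h

instance measOf_isFiniteMeasure (w : Ω → ℝ) : IsFiniteMeasure (measOf w) := by
  constructor
  rw [measOf_apply]
  exact ENNReal.sum_lt_top.mpr fun b _ => ENNReal.ofReal_lt_top

lemma measOf_apply_toReal (w : Ω → ℝ) (hw : ∀ a, 0 ≤ w a) (s : Set Ω) :
    (measOf w s).toReal = ∑ b, Set.indicator s w b := by
  rw [measOf_apply, ← ENNReal.ofReal_sum_of_nonneg (fun b _ => Set.indicator_nonneg (fun a _ => hw a) b),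
    ENNReal.toReal_ofReal (Finset.sum_nonneg fun b _ => Set.indicator_nonneg (fun a _ => hw a) b)]

end Meas

section MeasPi

lemma measOf_pi {ι : Type*} [Fintype ι] [DecidableEq ι] {α : ι → Type*} [∀ i, Fintype (α i)]
    [∀ i, MeasurableSpace (α i)] [∀ i, MeasurableSingletonClass (α i)]
    (w : ∀ i, α i → ℝ) (hw : ∀ i a, 0 ≤ w i a) :
    Measure.pi (fun i => measOf (w i)) = measOf (fun x => ∏ i, w i (x i)) := by
  apply MeasureTheory.Measure.ext_of_singleton
  intro x
  rw [measOf_singleton, ← Set.univ_pi_singleton, Measure.pi_pi,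
    ENNReal.ofReal_prod_of_nonneg (fun i _ => hw i (x i))]
  exact Finset.prod_congr rfl fun i _ => measOf_singleton (w i) (x i)

lemma measOf_prod {α β : Type*} [Fintype α] [Fintype β] [MeasurableSpace α] [MeasurableSpace β]
    [MeasurableSingletonClass α] [MeasurableSingletonClass β]
    (w1 : α → ℝ) (w2 : β → ℝ) (hw1 : ∀ a, 0 ≤ w1 a) :
    (measOf w1).prod (measOf w2) = measOf (fun p : α × β => w1 p.1 * w2 p.2) := by
  apply MeasureTheory.Measure.ext_of_singleton
  intro p
  rw [measOf_singleton, ← Set.singleton_prod_singleton, Measure.prod_prod,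
    measOf_singleton, measOf_singleton, ENNReal.ofReal_mul (hw1 p.1)]

lemma dirac_eq_measOf {α : Type*} [Fintype α] [DecidableEq α] [MeasurableSpace α]
    [MeasurableSingletonClass α] (j : α) :
    (Measure.dirac j : Measure α) = measOf (fun k => if k = j then (1:ℝ) else 0) := by
  apply MeasureTheory.Measure.ext_of_singleton
  intro a
  rw [measOf_singleton, Measure.dirac_apply' _ (measurableSet_singleton a)]
  by_cases h : a = j
  · subst h; simp
  · rw [if_neg h, ENNReal.ofReal_zero]
    rw [Set.indicator_of_notMem (by simp [Ne.symm h])]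

lemma sum_measOf {α ι : Type*} [Fintype α] [Fintype ι] [MeasurableSpace α]
    [MeasurableSingletonClass α] (W : ι → α → ℝ) (hW : ∀ j a, 0 ≤ W j a) :
    ∑ j : ι, measOf (W j) = measOf (fun a => ∑ j, W j a) := by
  apply MeasureTheory.Measure.ext_of_singleton
  intro a
  rw [Measure.finset_sum_apply, measOf_singleton,
    ENNReal.ofReal_sum_of_nonneg (fun j _ => hW j a)]
  exact Finset.sum_congr rfl fun j _ => measOf_singleton (W j) a

end MeasPi

lemma classMeasure_toReal {𝒳 : Type*} [Fintype 𝒳] [DecidableEq 𝒳] [MeasurableSpace 𝒳]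
    [MeasurableSingletonClass 𝒳] {M N n : ℕ} (P : Fin M → 𝒳 → ℝ)
    (hP0 : ∀ i a, 0 ≤ P i a) (s : Set ((Fin M → Fin N → 𝒳) × Fin M × (Fin n → 𝒳))) :
    ((classMeasure (N := N) (n := n) P) s).toReal
      = (M:ℝ)⁻¹ * ∑ ω : (Fin M → Fin N → 𝒳) × Fin M × (Fin n → 𝒳),
          Set.indicator s (fun ω => ∑ j : Fin M,
            (∏ i, ∏ r, P i (ω.1 i r)) *
              ((if ω.2.1 = j then (1:ℝ) else 0) * ∏ r, P j (ω.2.2 r))) ω := by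
  have htr : ∀ i : Fin M, (Measure.pi fun _ : Fin N => measOf (P i))
      = measOf (fun y : Fin N → 𝒳 => ∏ r, P i (y r)) :=
    fun i => measOf_pi _ (fun _ a => hP0 i a)
  have htrain : (Measure.pi fun i : Fin M => Measure.pi fun _ : Fin N => measOf (P i))
      = measOf (fun T : Fin M → Fin N → 𝒳 => ∏ i, ∏ r, P i (T i r)) := by
    have : (fun i : Fin M => Measure.pi fun _ : Fin N => measOf (P i))
        = fun i : Fin M => measOf (fun y : Fin N → 𝒳 => ∏ r, P i (y r)) := funext htr
    rw [this, measOf_pi _ (fun i y => Finset.prod_nonneg fun r _ => hP0 i (y r))]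
  have hmeas : classMeasure (N := N) (n := n) P
      = (M : ENNReal)⁻¹ • measOf (fun ω : (Fin M → Fin N → 𝒳) × Fin M × (Fin n → 𝒳) =>
          ∑ j : Fin M, (∏ i, ∏ r, P i (ω.1 i r)) *
            ((if ω.2.1 = j then (1:ℝ) else 0) * ∏ r, P j (ω.2.2 r))) := by
    rw [classMeasure]
    congr 1
    have hj : ∀ j : Fin M,
        (Measure.pi fun i : Fin M => Measure.pi fun _ : Fin N => measOf (P i)).prod
          ((Measure.dirac j).prod (Measure.pi fun _ : Fin n => measOf (P j)))
        = measOf (fun ω : (Fin M → Fin N → 𝒳) × Fin M × (Fin n → 𝒳) =>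
            (∏ i, ∏ r, P i (ω.1 i r)) *
              ((if ω.2.1 = j then (1:ℝ) else 0) * ∏ r, P j (ω.2.2 r))) := by
      intro j
      rw [htrain, dirac_eq_measOf j, measOf_pi _ (fun _ a => hP0 j a),
        measOf_prod _ _ (fun k => by split_ifs <;> norm_num),
        measOf_prod _ _ (fun T => Finset.prod_nonneg fun i _ =>
          Finset.prod_nonneg fun r _ => hP0 i (T i r))]
    rw [funext hj, sum_measOf _ (fun j ω => by
      have h1 : (0:ℝ) ≤ ∏ i, ∏ r, P i (ω.1 i r) :=
        Finset.prod_nonneg fun i _ => Finset.prod_nonneg fun r _ => hP0 i (ω.1 i r)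
      have h2 : (0:ℝ) ≤ ∏ r, P j (ω.2.2 r) := Finset.prod_nonneg fun r _ => hP0 j (ω.2.2 r)
      have h3 : (0:ℝ) ≤ (if ω.2.1 = j then (1:ℝ) else 0) := by split_ifs <;> norm_num
      positivity)]
  rw [hmeas, Measure.smul_apply, smul_eq_mul, ENNReal.toReal_mul,
    ENNReal.toReal_inv, ENNReal.toReal_natCast]
  congr 1
  apply measOf_apply_toReal
  intro ω
  apply Finset.sum_nonneg
  intro j _
  have h1 : (0:ℝ) ≤ ∏ i, ∏ r, P i (ω.1 i r) :=
    Finset.prod_nonneg fun i _ => Finset.prod_nonneg fun r _ => hP0 i (ω.1 i r)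
  have h2 : (0:ℝ) ≤ ∏ r, P j (ω.2.2 r) := Finset.prod_nonneg fun r _ => hP0 j (ω.2.2 r)
  have h3 : (0:ℝ) ≤ (if ω.2.1 = j then (1:ℝ) else 0) := by split_ifs <;> norm_num
  positivity

section Marg
variable {𝒳 : Type*} [Fintype 𝒳] [DecidableEq 𝒳]

lemma sum_wvec_one (Q : 𝒳 → ℝ) (hQ1 : ∑ a, Q a = 1) (m : ℕ) :
    ∑ y : Fin m → 𝒳, ∏ k, Q (y k) = 1 := by
  rw [← Fintype.sum_pow, hQ1, one_pow]

lemma train_marg {M N : ℕ} (P : Fin M → 𝒳 → ℝ) (hP1 : ∀ i, ∑ a, P i a = 1) (i : Fin M)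
    (C : (Fin N → 𝒳) → Prop) [DecidablePred C] :
    ∑ T : Fin M → (Fin N → 𝒳), (if C (T i) then ∏ i', ∏ r, P i' (T i' r) else 0)
      = ∑ y : Fin N → 𝒳, (if C y then ∏ r, P i (y r) else 0) := by
  classical
  set h : Fin M → (Fin N → 𝒳) → ℝ := fun i' y =>
    if i' = i then (if C y then ∏ r, P i (y r) else 0) else ∏ r, P i' (y r) with hh
  have step1 : ∀ T : Fin M → (Fin N → 𝒳),
      (if C (T i) then ∏ i', ∏ r, P i' (T i' r) else 0) = ∏ i', h i' (T i') := by
    intro T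
    by_cases hC : C (T i)
    · rw [if_pos hC]
      apply Finset.prod_congr rfl
      intro i' _
      by_cases hi : i' = i
      · subst hi; simp [hh, hC]
      · simp [hh, hi]
    · rw [if_neg hC]
      symm
      apply Finset.prod_eq_zero (Finset.mem_univ i)
      simp [hh, hC]
  rw [Finset.sum_congr rfl fun T _ => step1 T, ← Fintype.prod_sum]
  rw [Finset.prod_eq_single i]
  · simp [hh]
  · intro i' _ hi'
    have : ∀ y : Fin N → 𝒳, h i' y = ∏ r, P i' (y r) := fun y => by simp [hh, hi']
    rw [Finset.sum_congr rfl fun y _ => this y, sum_wvec_one (P i') (hP1 i')]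
  · intro habs; exact absurd (Finset.mem_univ i) habs

end Marg

lemma minPairTV_le {𝒳 : Type*} [Fintype 𝒳] [DecidableEq 𝒳] {M : ℕ} (Q : Fin M → 𝒳 → ℝ)
    {i j : Fin M} (hij : i ≠ j) : minPairTV Q ≤ tvDist (Q i) (Q j) := by
  apply csInf_le
  · exact ⟨0, fun x ⟨p, q, hpq, hx⟩ => hx ▸ tvDist_nonneg _ _⟩
  · exact ⟨i, j, hij, rfl⟩

lemma card_ge_two {𝒳 : Type*} [Fintype 𝒳] [DecidableEq 𝒳] {M : ℕ} (hM : 2 ≤ M) (P : Fin M → 𝒳 → ℝ)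
    (hP1 : ∀ i, ∑ a, P i a = 1) (hsep : 0 < minPairTV P) : 2 ≤ Fintype.card 𝒳 := by
  by_contra hcard
  push_neg at hcard
  have hi : (⟨0, by omega⟩ : Fin M) ≠ ⟨1, by omega⟩ := by
    simp [Fin.ext_iff]
  interval_cases hc : Fintype.card 𝒳
  · have := hP1 ⟨0, by omega⟩
    have hempty : (Finset.univ : Finset 𝒳) = ∅ := Finset.univ_eq_empty_iff.mpr
      (Fintype.card_eq_zero_iff.mp hc)
    rw [hempty, Finset.sum_empty] at this
    norm_num at this
  · obtain ⟨a, ha⟩ := Fintype.card_eq_one_iff.mp hc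
    have huniv : (Finset.univ : Finset 𝒳) = {a} := by
      apply Finset.eq_singleton_iff_unique_mem.mpr
      exact ⟨Finset.mem_univ a, fun b _ => ha b⟩
    have h1 : ∀ i : Fin M, P i a = 1 := by
      intro i
      have := hP1 i
      rwa [huniv, Finset.sum_singleton] at this
    have htv : tvDist (P ⟨0, by omega⟩) (P ⟨1, by omega⟩) = 0 := by
      rw [tvDist, huniv, Finset.sum_singleton, h1, h1]
      simp
    have := minPairTV_le P hi
    rw [htv] at this
    linarith

lemma dglClassify_spec {𝒳 : Type*} [Fintype 𝒳] {M : ℕ} (hM : 0 < M)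
    (T : Fin M → 𝒳 → ℝ) (ν : 𝒳 → ℝ) (j : Fin M) :
    dglScore T ν (dglClassify hM T ν) ≤ dglScore T ν j := by
  have := Finset.min'_mem (Finset.univ.filter fun i => ∀ j, dglScore T ν i ≤ dglScore T ν j)
    (by
      obtain ⟨i, -, hi⟩ := Finset.exists_min_image Finset.univ (dglScore T ν)
        ⟨⟨0, hM⟩, Finset.mem_univ _⟩
      exact ⟨i, Finset.mem_filter.mpr ⟨Finset.mem_univ _, fun j => hi j (Finset.mem_univ _)⟩⟩)
  exact (Finset.mem_filter.mp this).2 j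



lemma final_arith {Mr K c G : ℝ} (hMR : 2 ≤ Mr) (hMcase : Mr = 2 ∨ 3 ≤ Mr)
    (hc2 : 2 ≤ c) (hKc : c ≤ K) (hKM : (Mr - 1) ^ 2 ≤ K) (hG0 : 0 < G)
    (hcase : 2 * Mr * (K * Real.exp (-G)) < 1) :
    Mr * (Mr - 1) * (2 * Real.exp (-G)) + Mr * (2 * c * Real.exp (-(9/4 * G)))
      ≤ 2 * Mr * (K * Real.exp (-G)) := by
  have hK1 : (1:ℝ) ≤ K := by linarith
  have he : (0:ℝ) < Real.exp (-G) := Real.exp_pos _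
  have hq : Real.exp (-(9/4 * G)) = Real.exp (-G) * (Real.exp (-G) * Real.exp (-(1/4 * G))) := by
    rw [← Real.exp_add, ← Real.exp_add]
    congr 1
    ring
  have hq1 : Real.exp (-(1/4 * G)) ≤ 1 :=
    Real.exp_le_one_iff.mpr (neg_nonpos.mpr (by nlinarith))
  have hterm2 : Mr * (2 * c * Real.exp (-(9/4 * G))) ≤ Real.exp (-G) := by
    rw [hq]
    have h2 : 2 * Mr * (c * Real.exp (-G)) ≤ 2 * Mr * (K * Real.exp (-G)) := by
      apply mul_le_mul_of_nonneg_left _ (by linarith : (0:ℝ) ≤ 2 * Mr)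
      exact mul_le_mul_of_nonneg_right hKc he.le
    have hA : 2 * Mr * (c * Real.exp (-G)) < 1 := lt_of_le_of_lt h2 hcase
    calc Mr * (2 * c * (Real.exp (-G) * (Real.exp (-G) * Real.exp (-(1/4 * G)))))
        = (2 * Mr * (c * Real.exp (-G))) * (Real.exp (-G) * Real.exp (-(1/4 * G))) := by ring
      _ ≤ 1 * (Real.exp (-G) * Real.exp (-(1/4 * G))) := by
          apply mul_le_mul_of_nonneg_right hA.le (by positivity)
      _ = Real.exp (-G) * Real.exp (-(1/4 * G)) := one_mul _
      _ ≤ Real.exp (-G) * 1 := mul_le_mul_of_nonneg_left hq1 he.le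
      _ = Real.exp (-G) := mul_one _
  have hcount : 2 * Mr * (Mr - 1) + 1 ≤ 2 * Mr * K := by
    rcases hMcase with hMeq | hM3
    · rw [hMeq]
      linarith
    · have h4 : (2:ℝ) ≤ (Mr - 1) * (Mr - 2) := by nlinarith
      have e1 : 2 * Mr * (Mr - 1) ^ 2 ≤ 2 * Mr * K := by
        apply mul_le_mul_of_nonneg_left hKM (by linarith)
      nlinarith
  have hx : (2 * Mr * (Mr - 1) + 1) * Real.exp (-G) ≤ 2 * Mr * K * Real.exp (-G) :=
    mul_le_mul_of_nonneg_right hcount he.le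
  nlinarith [hx, hterm2]

set_option maxHeartbeats 4000000 in
theorem stmt_15 {𝒳 : Type*} [Fintype 𝒳] [DecidableEq 𝒳] [MeasurableSpace 𝒳]
    [MeasurableSingletonClass 𝒳]
    {M : ℕ} (hM : 2 ≤ M)
    (P : Fin M → 𝒳 → ℝ) (hP0 : ∀ i a, 0 ≤ P i a) (hP1 : ∀ i, ∑ a, P i a = 1)
    {n N : ℕ} (hn : 0 < n) (hN : 0 < N) (α : ℝ) (hα : 0 < α)
    (hNnα : (N : ℝ) = n * α)
    (hsep : 0 < minPairTV P) :
    ((classMeasure (N := N) (n := n) P)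
        (errEvent (𝒳 := 𝒳) (by omega : 0 < M))).toReal ≤
      2 * M * Real.exp (-(n : ℝ) *
        (2 * α * minPairTV P ^ 2 /
            (3 * (Fintype.card 𝒳 : ℝ) + 2 * Real.sqrt α) ^ 2 -
          max (2 * Real.log ((M : ℝ) - 1) / n)
            (Real.log (Fintype.card 𝒳 : ℝ) / n))) := by
  classical
  have hM0 : 0 < M := by omega
  have hcard2 : 2 ≤ Fintype.card 𝒳 := card_ge_two hM P hP1 hsep
  have h𝒳ne : Nonempty 𝒳 := Fintype.card_pos_iff.mp (by omega)
  have hnR : (0:ℝ) < n := by exact_mod_cast hn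
  have hNR : (0:ℝ) < N := by exact_mod_cast hN
  have hMR : (2:ℝ) ≤ M := by exact_mod_cast hM
  set c : ℝ := (Fintype.card 𝒳 : ℝ) with hc_def
  have hc2 : (2:ℝ) ≤ c := by rw [hc_def]; exact_mod_cast hcard2
  have hc0 : (0:ℝ) < c := by linarith
  set V : ℝ := minPairTV P with hV_def
  have hV0 : 0 < V := hsep
  have hsq : (0:ℝ) < Real.sqrt α := Real.sqrt_pos.mpr hα
  set D : ℝ := 3 * c + 2 * Real.sqrt α with hD_def
  have hD0 : 0 < D := by nlinarith
  set t1 : ℝ := 3 * c * V / (4 * D) with ht1_def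
  set t3 : ℝ := Real.sqrt α * V / D with ht3_def
  have ht10 : 0 < t1 := by rw [ht1_def]; positivity
  have ht30 : 0 < t3 := by rw [ht3_def]; positivity
  have hbudget : V = 4 * t1 + 2 * t3 := by
    rw [ht1_def, ht3_def, hD_def]
    field_simp
  set G : ℝ := 2 * n * α * V ^ 2 / D ^ 2 with hG_def
  have hG0 : 0 < G := by rw [hG_def]; positivity
  set K : ℝ := Real.exp (max (2 * Real.log ((M:ℝ) - 1)) (Real.log c)) with hK_def
  have hM1 : (1:ℝ) ≤ (M:ℝ) - 1 := by linarith
  have hKc : c ≤ K := by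
    rw [hK_def]
    calc c = Real.exp (Real.log c) := (Real.exp_log hc0).symm
    _ ≤ _ := Real.exp_le_exp.mpr (le_max_right _ _)
  have hKM : ((M:ℝ) - 1) ^ 2 ≤ K := by
    rw [hK_def]
    calc ((M:ℝ)-1)^2 = Real.exp (2 * Real.log ((M:ℝ)-1)) := by
          rw [two_mul, Real.exp_add, Real.exp_log (by linarith)]; ring
    _ ≤ _ := Real.exp_le_exp.mpr (le_max_left _ _)
  have hK1 : (1:ℝ) ≤ K := by linarith
  have hRHSeq : Real.exp (-(n : ℝ) * (2 * α * V ^ 2 / D ^ 2 -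
      max (2 * Real.log ((M : ℝ) - 1) / n) (Real.log c / n))) = K * Real.exp (-G) := by
    rw [hK_def, ← Real.exp_add]
    congr 1
    have hmax : (n:ℝ) * max (2 * Real.log ((M : ℝ) - 1) / n) (Real.log c / n)
        = max (2 * Real.log ((M : ℝ) - 1)) (Real.log c) := by
      rcases max_cases (2 * Real.log ((M : ℝ) - 1) / n) (Real.log c / n) with ⟨h1, h2⟩ | ⟨h1, h2⟩
      · rw [h1, max_eq_left (by
          have := (div_le_div_iff_of_pos_right hnR).mp h2
          linarith)]
        field_simp
      · rw [h1, max_eq_right (by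
          have := (div_le_div_iff_of_pos_right hnR).mp h2.le
          linarith)]
        field_simp
    have e1 : (n:ℝ) * (2 * α * V ^ 2 / D ^ 2) = G := by rw [hG_def]; ring
    linear_combination hmax - e1
  rw [classMeasure_toReal P hP0, hRHSeq]
  -- basic weights
  have hwte0 : ∀ (j : Fin M) (x : Fin n → 𝒳), (0:ℝ) ≤ ∏ r, P j (x r) :=
    fun j x => Finset.prod_nonneg fun r _ => hP0 j (x r)
  have hwtr0 : ∀ T : Fin M → Fin N → 𝒳, (0:ℝ) ≤ ∏ i, ∏ r, P i (T i r) :=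
    fun T => Finset.prod_nonneg fun i _ => Finset.prod_nonneg fun r _ => hP0 i (T i r)
  have hwte_sum : ∀ j : Fin M, ∑ x : Fin n → 𝒳, ∏ r, P j (x r) = 1 :=
    fun j => sum_wvec_one (P j) (hP1 j) n
  have hwtr_sum : ∑ T : Fin M → Fin N → 𝒳, ∏ i, ∏ r, P i (T i r) = 1 := by
    rw [← Fintype.prod_sum (fun i (y : Fin N → 𝒳) => ∏ r, P i (y r))]
    exact Finset.prod_eq_one fun i _ => sum_wvec_one (P i) (hP1 i) N
  set S : Fin M → ℝ := fun j => ∑ T : Fin M → Fin N → 𝒳, (∏ i, ∏ r, P i (T i r)) *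
      ∑ x : Fin n → 𝒳, (if dglClassify hM0 (fun i => empDist (T i)) (empDist x) ≠ j
        then ∏ r, P j (x r) else 0) with hS_def
  have hind : ∑ ω : (Fin M → Fin N → 𝒳) × Fin M × (Fin n → 𝒳),
      Set.indicator (errEvent (𝒳 := 𝒳) (by omega : 0 < M)) (fun ω => ∑ j : Fin M,
        (∏ i, ∏ r, P i (ω.1 i r)) *
          ((if ω.2.1 = j then (1:ℝ) else 0) * ∏ r, P j (ω.2.2 r))) ω
      = ∑ j, S j := by
    rw [Fintype.sum_prod_type]
    have h1 : ∀ (T : Fin M → Fin N → 𝒳) (p : Fin M × (Fin n → 𝒳)),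
        Set.indicator (errEvent (𝒳 := 𝒳) (by omega : 0 < M)) (fun ω => ∑ j : Fin M,
          (∏ i, ∏ r, P i (ω.1 i r)) *
            ((if ω.2.1 = j then (1:ℝ) else 0) * ∏ r, P j (ω.2.2 r))) (T, p)
        = if dglClassify hM0 (fun i => empDist (T i)) (empDist p.2) ≠ p.1
            then (∏ i, ∏ r, P i (T i r)) * ∏ r, P (p.1) (p.2 r) else 0 := by
      intro T p
      have hmem : ((T, p) ∈ errEvent (𝒳 := 𝒳) (M := M) (N := N) (n := n) (by omega : 0 < M))
          ↔ dglClassify hM0 (fun i => empDist (T i)) (empDist p.2) ≠ p.1 := Iff.rfl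
      have hBig : ∑ j : Fin M, (∏ i, ∏ r, P i (T i r)) *
          ((if p.1 = j then (1:ℝ) else 0) * ∏ r, P j (p.2 r))
          = (∏ i, ∏ r, P i (T i r)) * ∏ r, P (p.1) (p.2 r) := by
        have h2 : ∀ j : Fin M, (∏ i, ∏ r, P i (T i r)) *
            ((if p.1 = j then (1:ℝ) else 0) * ∏ r, P j (p.2 r))
            = if p.1 = j then (∏ i, ∏ r, P i (T i r)) * ∏ r, P j (p.2 r) else 0 := by
          intro j
          split_ifs <;> ring
        rw [Finset.sum_congr rfl fun j _ => h2 j,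
          Finset.sum_ite_eq Finset.univ p.1 (fun j => (∏ i, ∏ r, P i (T i r)) * ∏ r, P j (p.2 r))]
        simp
      rw [Set.indicator_apply]
      by_cases hm : dglClassify hM0 (fun i => empDist (T i)) (empDist p.2) ≠ p.1
      · rw [if_pos (hmem.mpr hm), if_pos hm, hBig]
      · rw [if_neg (fun hh => hm (hmem.mp hh)), if_neg hm]
    rw [Finset.sum_congr rfl fun T _ => Finset.sum_congr rfl fun p _ => h1 T p]
    have h3 : ∀ T : Fin M → Fin N → 𝒳, ∑ p : Fin M × (Fin n → 𝒳),
        (if dglClassify hM0 (fun i => empDist (T i)) (empDist p.2) ≠ p.1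
          then (∏ i, ∏ r, P i (T i r)) * ∏ r, P (p.1) (p.2 r) else 0)
        = ∑ j : Fin M, (∏ i, ∏ r, P i (T i r)) *
            ∑ x : Fin n → 𝒳, (if dglClassify hM0 (fun i => empDist (T i)) (empDist x) ≠ j
              then ∏ r, P j (x r) else 0) := by
      intro T
      rw [Fintype.sum_prod_type]
      apply Finset.sum_congr rfl
      intro j _
      rw [Finset.mul_sum]
      apply Finset.sum_congr rfl
      intro x _
      split_ifs <;> ring
    rw [Finset.sum_congr rfl fun T _ => h3 T, Finset.sum_comm]
  rw [hind]
  have hS1 : ∀ j, S j ≤ 1 := by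
    intro j
    rw [hS_def]
    calc ∑ T : Fin M → Fin N → 𝒳, (∏ i, ∏ r, P i (T i r)) *
        ∑ x : Fin n → 𝒳, (if dglClassify hM0 (fun i => empDist (T i)) (empDist x) ≠ j
          then ∏ r, P j (x r) else 0)
        ≤ ∑ T : Fin M → Fin N → 𝒳, (∏ i, ∏ r, P i (T i r)) * 1 := by
          apply Finset.sum_le_sum
          intro T _
          apply mul_le_mul_of_nonneg_left _ (hwtr0 T)
          calc ∑ x : Fin n → 𝒳, (if dglClassify hM0 (fun i => empDist (T i)) (empDist x) ≠ j
              then ∏ r, P j (x r) else 0)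
              ≤ ∑ x : Fin n → 𝒳, ∏ r, P j (x r) := by
                apply Finset.sum_le_sum
                intro x _
                split_ifs
                · exact le_refl _
                · exact hwte0 j x
            _ = 1 := hwte_sum j
      _ = 1 := by
          rw [Finset.sum_congr rfl fun T _ => mul_one _, hwtr_sum]
  have hMinv : (0:ℝ) ≤ ((M:ℕ):ℝ)⁻¹ := by positivity
  by_cases hcase : 1 ≤ 2 * (M:ℝ) * (K * Real.exp (-G))
  · -- trivial case: LHS ≤ 1 ≤ RHS
    calc ((M:ℕ):ℝ)⁻¹ * ∑ j, S j ≤ ((M:ℕ):ℝ)⁻¹ * ∑ _j : Fin M, (1:ℝ) := by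
          apply mul_le_mul_of_nonneg_left _ hMinv
          exact Finset.sum_le_sum fun j _ => hS1 j
      _ = 1 := by
          rw [Finset.sum_const, Finset.card_univ, Fintype.card_fin, nsmul_eq_mul, mul_one]
          rw [inv_mul_cancel₀ (by positivity : ((M:ℕ):ℝ) ≠ 0)]
      _ ≤ 2 * ↑M * (K * Real.exp (-G)) := hcase
  · push_neg at hcase
    have hcne : c ≠ 0 := ne_of_gt hc0
    have hDne : D ≠ 0 := ne_of_gt hD0
    have hVle : ∀ p q : Fin M, p ≠ q → V ≤ tvDist (P p) (P q) := by
      intro p q h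
      rw [hV_def]
      exact minPairTV_le P h
    have hE3 : Real.exp (-2 * (n:ℝ) * t3 ^ 2) = Real.exp (-G) := by
      congr 1
      have h1 : t3 ^ 2 = α * V ^ 2 / D ^ 2 := by
        rw [ht3_def, div_pow, mul_pow, Real.sq_sqrt hα.le]
      rw [h1, hG_def]
      ring
    have hE1 : Real.exp (-2 * (N:ℝ) * (2 * t1 / c) ^ 2) = Real.exp (-(9/4 * G)) := by
      congr 1
      rw [ht1_def, hG_def, hNnα]
      field_simp
      ring
    have hSmain : ∀ j, S j ≤ (M:ℝ) * ((M:ℝ) - 1) * (2 * Real.exp (-G))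
        + (M:ℝ) * (2 * c * Real.exp (-(9/4 * G))) := by
      intro j
      set inner : (Fin M → Fin N → 𝒳) → ℝ := fun T =>
        ∑ x : Fin n → 𝒳, (if dglClassify hM0 (fun i => empDist (T i)) (empDist x) ≠ j
          then ∏ r, P j (x r) else 0) with hinner_def
      have hinner0 : ∀ T, 0 ≤ inner T := by
        intro T
        apply Finset.sum_nonneg
        intro x _
        split_ifs
        · exact hwte0 j x
        · exact le_refl 0
      have hinner1 : ∀ T, inner T ≤ 1 := by
        intro T
        rw [hinner_def]
        calc ∑ x : Fin n → 𝒳, (if dglClassify hM0 (fun i => empDist (T i)) (empDist x) ≠ j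
            then ∏ r, P j (x r) else 0)
            ≤ ∑ x : Fin n → 𝒳, ∏ r, P j (x r) := by
              apply Finset.sum_le_sum
              intro x _
              split_ifs
              · exact le_refl _
              · exact hwte0 j x
          _ = 1 := hwte_sum j
      set good : (Fin M → Fin N → 𝒳) → Prop := fun T =>
        ∀ i, tvDist (empDist (T i)) (P i) < t1 with hgood_def
      have hsplit : S j = (∑ T : Fin M → Fin N → 𝒳,
            if good T then (∏ i, ∏ r, P i (T i r)) * inner T else 0)
          + ∑ T : Fin M → Fin N → 𝒳,
            (if ¬ good T then (∏ i, ∏ r, P i (T i r)) * inner T else 0) := by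
        rw [hS_def, ← Finset.sum_add_distrib]
        apply Finset.sum_congr rfl
        intro T _
        by_cases h : good T
        · rw [if_pos h, if_neg (not_not_intro h), add_zero]
        · rw [if_neg h, if_pos h, zero_add]
      -- good part
      have hinner_good : ∀ T : Fin M → Fin N → 𝒳, good T →
          inner T ≤ (M:ℝ) * ((M:ℝ) - 1) * (2 * Real.exp (-G)) := by
        intro T hgoodT
        have hpt : ∀ x : Fin n → 𝒳,
            (if dglClassify hM0 (fun i => empDist (T i)) (empDist x) ≠ j
              then ∏ r, P j (x r) else 0)
            ≤ ∑ pq : Fin M × Fin M,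
              (if pq.1 ≠ pq.2 ∧ t3 ≤
                  |(∑ a ∈ Finset.univ.filter fun a =>
                      empDist (T pq.2) a ≤ empDist (T pq.1) a, P j a) -
                   (∑ a ∈ Finset.univ.filter fun a =>
                      empDist (T pq.2) a ≤ empDist (T pq.1) a, empDist x a)|
                then ∏ r, P j (x r) else 0) := by
          intro x
          by_cases hcl : dglClassify hM0 (fun i => empDist (T i)) (empDist x) ≠ j
          · rw [if_pos hcl]
            obtain ⟨p, q, hpq, hdev⟩ := det_lemma (fun i => empDist (T i))
              (fun i => empDist_sum hN (T i)) P hP1 (empDist x) hVle hgoodT hbudget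
              hcl (dglClassify_spec hM0 (fun i => empDist (T i)) (empDist x) j)
            have hmem := Finset.single_le_sum
              (f := fun pq : Fin M × Fin M =>
                (if pq.1 ≠ pq.2 ∧ t3 ≤
                    |(∑ a ∈ Finset.univ.filter fun a =>
                        empDist (T pq.2) a ≤ empDist (T pq.1) a, P j a) -
                     (∑ a ∈ Finset.univ.filter fun a =>
                        empDist (T pq.2) a ≤ empDist (T pq.1) a, empDist x a)|
                  then ∏ r, P j (x r) else 0))
              (fun pq _ => by
                split_ifs
                · exact hwte0 j x
                · exact le_refl 0)
              (Finset.mem_univ (p, q))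
            simpa [hpq, hdev] using hmem
          · rw [if_neg hcl]
            apply Finset.sum_nonneg
            intro pq _
            split_ifs
            · exact hwte0 j x
            · exact le_refl 0
        have hpq_bound : ∀ pq : Fin M × Fin M,
            (∑ x : Fin n → 𝒳, (if pq.1 ≠ pq.2 ∧ t3 ≤
                |(∑ a ∈ Finset.univ.filter fun a =>
                    empDist (T pq.2) a ≤ empDist (T pq.1) a, P j a) -
                 (∑ a ∈ Finset.univ.filter fun a =>
                    empDist (T pq.2) a ≤ empDist (T pq.1) a, empDist x a)|
              then ∏ r, P j (x r) else 0))
            ≤ (if pq.1 = pq.2 then 0 else 2 * Real.exp (-2 * (n:ℝ) * t3 ^ 2)) := by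
          intro pq
          by_cases he : pq.1 = pq.2
          · rw [if_pos he]
            apply le_of_eq
            apply Finset.sum_eq_zero
            intro x _
            rw [if_neg]
            rintro ⟨hne, -⟩
            exact hne he
          · rw [if_neg he]
            set A : Finset 𝒳 := Finset.univ.filter fun a =>
              empDist (T pq.2) a ≤ empDist (T pq.1) a with hA_def
            have hstep : ∀ x : Fin n → 𝒳,
                (if pq.1 ≠ pq.2 ∧ t3 ≤ |(∑ a ∈ A, P j a) - (∑ a ∈ A, empDist x a)|
                  then ∏ r, P j (x r) else 0)
                = (if t3 ≤ |(cntIn A x : ℝ) / n - ∑ a ∈ A, P j a|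
                  then ∏ r, P j (x r) else 0) := by
              intro x
              have hc1 : |(∑ a ∈ A, P j a) - (∑ a ∈ A, empDist x a)|
                  = |(cntIn A x : ℝ) / n - ∑ a ∈ A, P j a| := by
                rw [abs_sub_comm, empDist_setsum x A]
              by_cases hcnd : t3 ≤ |(cntIn A x : ℝ) / n - ∑ a ∈ A, P j a|
              · rw [if_pos ⟨he, by rw [hc1]; exact hcnd⟩, if_pos hcnd]
              · rw [if_neg (fun hh => hcnd (hc1 ▸ hh.2)), if_neg hcnd]
            rw [Finset.sum_congr rfl fun x _ => hstep x]
            exact freq_dev (P j) (hP0 j) (hP1 j) A hn ht30.le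
        have hcnt : ∑ pq : Fin M × Fin M,
            (if pq.1 = pq.2 then (0:ℝ) else 2 * Real.exp (-2 * (n:ℝ) * t3 ^ 2))
            = (M:ℝ) * ((M:ℝ) - 1) * (2 * Real.exp (-2 * (n:ℝ) * t3 ^ 2)) := by
          set B : ℝ := 2 * Real.exp (-2 * (n:ℝ) * t3 ^ 2) with hB_def
          rw [Fintype.sum_prod_type]
          have hrow : ∀ p : Fin M, ∑ q : Fin M, (if p = q then (0:ℝ) else B)
              = ((M:ℝ) - 1) * B := by
            intro p
            have h1 : ∀ q : Fin M, (if p = q then (0:ℝ) else B)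
                = B - (if p = q then B else 0) := by
              intro q
              split_ifs <;> ring
            rw [Finset.sum_congr rfl fun q _ => h1 q, Finset.sum_sub_distrib,
              Finset.sum_const, Finset.card_univ, Fintype.card_fin, nsmul_eq_mul,
              Finset.sum_ite_eq Finset.univ p (fun _ => B), if_pos (Finset.mem_univ p)]
            ring
          rw [Finset.sum_congr rfl fun p _ => hrow p, Finset.sum_const,
            Finset.card_univ, Fintype.card_fin, nsmul_eq_mul]
          ring
        calc inner T ≤ ∑ x : Fin n → 𝒳, ∑ pq : Fin M × Fin M,
              (if pq.1 ≠ pq.2 ∧ t3 ≤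
                  |(∑ a ∈ Finset.univ.filter fun a =>
                      empDist (T pq.2) a ≤ empDist (T pq.1) a, P j a) -
                   (∑ a ∈ Finset.univ.filter fun a =>
                      empDist (T pq.2) a ≤ empDist (T pq.1) a, empDist x a)|
                then ∏ r, P j (x r) else 0) := Finset.sum_le_sum fun x _ => hpt x
          _ = ∑ pq : Fin M × Fin M, ∑ x : Fin n → 𝒳,
              (if pq.1 ≠ pq.2 ∧ t3 ≤
                  |(∑ a ∈ Finset.univ.filter fun a =>
                      empDist (T pq.2) a ≤ empDist (T pq.1) a, P j a) -
                   (∑ a ∈ Finset.univ.filter fun a =>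
                      empDist (T pq.2) a ≤ empDist (T pq.1) a, empDist x a)|
                then ∏ r, P j (x r) else 0) := Finset.sum_comm
          _ ≤ ∑ pq : Fin M × Fin M,
              (if pq.1 = pq.2 then (0:ℝ) else 2 * Real.exp (-2 * (n:ℝ) * t3 ^ 2)) :=
              Finset.sum_le_sum fun pq _ => hpq_bound pq
          _ = (M:ℝ) * ((M:ℝ) - 1) * (2 * Real.exp (-2 * (n:ℝ) * t3 ^ 2)) := hcnt
          _ = (M:ℝ) * ((M:ℝ) - 1) * (2 * Real.exp (-G)) := by rw [hE3]
      have hgoodpart : (∑ T : Fin M → Fin N → 𝒳,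
            if good T then (∏ i, ∏ r, P i (T i r)) * inner T else 0)
          ≤ (M:ℝ) * ((M:ℝ) - 1) * (2 * Real.exp (-G)) := by
        have hBnn : (0:ℝ) ≤ (M:ℝ) * ((M:ℝ) - 1) * (2 * Real.exp (-G)) :=
          mul_nonneg (mul_nonneg (Nat.cast_nonneg M) (le_trans zero_le_one hM1))
            (by positivity)
        calc (∑ T : Fin M → Fin N → 𝒳,
              if good T then (∏ i, ∏ r, P i (T i r)) * inner T else 0)
            ≤ ∑ T : Fin M → Fin N → 𝒳,
              (∏ i, ∏ r, P i (T i r)) * ((M:ℝ) * ((M:ℝ) - 1) * (2 * Real.exp (-G))) := by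
              apply Finset.sum_le_sum
              intro T _
              split_ifs with h
              · exact mul_le_mul_of_nonneg_left (hinner_good T h) (hwtr0 T)
              · exact mul_nonneg (hwtr0 T) hBnn
          _ = (M:ℝ) * ((M:ℝ) - 1) * (2 * Real.exp (-G)) := by
              rw [← Finset.sum_mul, hwtr_sum, one_mul]
      -- bad part
      have hbadpart : (∑ T : Fin M → Fin N → 𝒳,
            (if ¬ good T then (∏ i, ∏ r, P i (T i r)) * inner T else 0))
          ≤ (M:ℝ) * (2 * c * Real.exp (-(9/4 * G))) := by
        have hstep1 : ∀ T : Fin M → Fin N → 𝒳,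
            (if ¬ good T then (∏ i, ∏ r, P i (T i r)) * inner T else 0)
            ≤ ∑ i : Fin M, (if t1 ≤ tvDist (empDist (T i)) (P i)
                then (∏ i', ∏ r, P i' (T i' r)) else 0) := by
          intro T
          by_cases h : good T
          · rw [if_neg (not_not_intro h)]
            apply Finset.sum_nonneg
            intro i _
            split_ifs
            · exact hwtr0 T
            · exact le_refl 0
          · rw [if_pos h]
            have h' : ∃ i, t1 ≤ tvDist (empDist (T i)) (P i) := by
              by_contra hno
              push_neg at hno
              exact h (fun i => hno i)
            obtain ⟨i, hi'⟩ := h'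
            have hmem := Finset.single_le_sum
              (f := fun i : Fin M => (if t1 ≤ tvDist (empDist (T i)) (P i)
                then (∏ i', ∏ r, P i' (T i' r)) else 0))
              (fun i _ => by
                split_ifs
                · exact hwtr0 T
                · exact le_refl 0)
              (Finset.mem_univ i)
            simp only [if_pos hi'] at hmem
            calc (∏ i, ∏ r, P i (T i r)) * inner T
                ≤ (∏ i, ∏ r, P i (T i r)) * 1 :=
                  mul_le_mul_of_nonneg_left (hinner1 T) (hwtr0 T)
              _ = ∏ i, ∏ r, P i (T i r) := mul_one _
              _ ≤ _ := hmem
        calc (∑ T : Fin M → Fin N → 𝒳,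
              (if ¬ good T then (∏ i, ∏ r, P i (T i r)) * inner T else 0))
            ≤ ∑ T : Fin M → Fin N → 𝒳, ∑ i : Fin M,
              (if t1 ≤ tvDist (empDist (T i)) (P i)
                then (∏ i', ∏ r, P i' (T i' r)) else 0) :=
              Finset.sum_le_sum fun T _ => hstep1 T
          _ = ∑ i : Fin M, ∑ T : Fin M → Fin N → 𝒳,
              (if t1 ≤ tvDist (empDist (T i)) (P i)
                then (∏ i', ∏ r, P i' (T i' r)) else 0) := Finset.sum_comm
          _ = ∑ i : Fin M, ∑ y : Fin N → 𝒳,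
              (if t1 ≤ tvDist (empDist y) (P i) then ∏ r, P i (y r) else 0) := by
              apply Finset.sum_congr rfl
              intro i _
              exact train_marg P hP1 i (fun y => t1 ≤ tvDist (empDist y) (P i))
          _ ≤ ∑ _i : Fin M, 2 * c * Real.exp (-2 * (N:ℝ) * (2 * t1 / c) ^ 2) := by
              apply Finset.sum_le_sum
              intro i _
              have := tv_dev (P i) (hP0 i) (hP1 i) hN ht10 h𝒳ne
              rw [← hc_def] at this
              exact this
          _ = (M:ℝ) * (2 * c * Real.exp (-(9/4 * G))) := by
              rw [Finset.sum_const, Finset.card_univ, Fintype.card_fin, nsmul_eq_mul, hE1]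
      rw [hsplit]
      exact add_le_add hgoodpart hbadpart
    have hMcase : ((M:ℕ):ℝ) = 2 ∨ (3:ℝ) ≤ ((M:ℕ):ℝ) := by
      rcases eq_or_lt_of_le hM with hMeq | hMgt
      · left; rw [← hMeq]; norm_num
      · right
        have h3 : 3 ≤ M := hMgt
        exact_mod_cast h3
    have hfinal := final_arith hMR hMcase hc2 hKc hKM hG0 hcase
    calc ((M:ℕ):ℝ)⁻¹ * ∑ j, S j
        ≤ ((M:ℕ):ℝ)⁻¹ * ∑ _j : Fin M, ((M:ℝ) * ((M:ℝ) - 1) * (2 * Real.exp (-G))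
            + (M:ℝ) * (2 * c * Real.exp (-(9/4 * G)))) := by
          apply mul_le_mul_of_nonneg_left _ hMinv
          exact Finset.sum_le_sum fun j _ => hSmain j
      _ = (M:ℝ) * ((M:ℝ) - 1) * (2 * Real.exp (-G))
            + (M:ℝ) * (2 * c * Real.exp (-(9/4 * G))) := by
          rw [Finset.sum_const, Finset.card_univ, Fintype.card_fin, nsmul_eq_mul]
          rw [← mul_assoc, inv_mul_cancel₀ (by positivity : ((M:ℕ):ℝ) ≠ 0), one_mul]
      _ ≤ 2 * ↑M * (K * Real.exp (-G)) := hfinal
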